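/- Let I be a type and work in the Hilbert space H = ℓ²(ℕ × Bool × I). Let K be the topological closure of the linear span of the set consisting of the vectors δ_{(0,true,i)} for i ∈ I together with the vectors (δ_{(d,false,i)} + δ_{(d+1,true,i)})/√2 for d ∈ ℕ and i ∈ I, and let P_K denote the orthogonal projection of H onto K. For any unit vector w ∈ ℓ²(ℕ × I), define W ∈ H by W(d, false, i) = w(d, i) and W(d, true, i) = 0 for all d ∈ ℕ, i ∈ I. Then ‖P_K W‖² = 1/2. -/

import Mathlib

open scoped ENNReal ComplexConjugate

local notation "⟪" x ", " y "⟫" => inner (𝕜 := ℂ) x y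

set_option maxHeartbeats 1000000 in
theorem stmt_5 {I : Type*} [DecidableEq I]
    (K : Submodule ℂ (lp (fun _ : ℕ × Bool × I => ℂ) 2)) [CompleteSpace K]
    (hK : K = (Submodule.span ℂ
      (({v | ∃ i : I, v = lp.single 2 ((0 : ℕ), true, i) (1 : ℂ)} ∪
        {v | ∃ (d : ℕ) (i : I), v = ((Real.sqrt 2)⁻¹ : ℂ) •
          (lp.single 2 (d, false, i) (1 : ℂ) +
            lp.single 2 (d + 1, true, i) (1 : ℂ))}) :
        Set (lp (fun _ : ℕ × Bool × I => ℂ) 2))).topologicalClosure)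
    (w : lp (fun _ : ℕ × I => ℂ) 2) (hw : ‖w‖ = 1)
    (W : lp (fun _ : ℕ × Bool × I => ℂ) 2)
    (hWf : ∀ (d : ℕ) (i : I), W (d, false, i) = w (d, i))
    (hWt : ∀ (d : ℕ) (i : I), W (d, true, i) = 0) :
    ‖(K.orthogonalProjectionOnto W : lp (fun _ : ℕ × Bool × I => ℂ) 2)‖ ^ 2 = 1 / 2 := by
  classical
  set S : Set (lp (fun _ : ℕ × Bool × I => ℂ) 2) :=
      ({v | ∃ i : I, v = lp.single 2 ((0 : ℕ), true, i) (1 : ℂ)} ∪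
        {v | ∃ (d : ℕ) (i : I), v = ((Real.sqrt 2)⁻¹ : ℂ) •
          (lp.single 2 (d, false, i) (1 : ℂ) +
            lp.single 2 (d + 1, true, i) (1 : ℂ))}) with hS
  -- the "shifted" part of u
  set T : (ℕ × Bool × I) → ℂ := fun x =>
    if x.2.1 = true ∧ 0 < x.1 then w (x.1 - 1, x.2.2) / 2 else 0 with hTdef
  have hT_f : ∀ (d : ℕ) (i : I), T (d, false, i) = 0 := by
    intro d i; rw [hTdef]; simp
  have hT_t0 : ∀ i : I, T ((0 : ℕ), true, i) = 0 := by
    intro i; rw [hTdef]; simp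
  have hT_ts : ∀ (d : ℕ) (i : I), T (d + 1, true, i) = w (d, i) / 2 := by
    intro d i; rw [hTdef]; simp
  have hg2 : Function.Injective (fun p : ℕ × I => ((p.1 + 1, true, p.2) : ℕ × Bool × I)) := by
    intro a b h
    simp only [Prod.mk.injEq] at h
    exact Prod.ext (by omega) h.2.2
  have hg1 : Function.Injective (fun p : ℕ × I => ((p.1, false, p.2) : ℕ × Bool × I)) := by
    intro a b h
    simp only [Prod.mk.injEq] at h
    exact Prod.ext h.1 h.2.2
  have hTrange : ∀ x : ℕ × Bool × I,
      x ∉ Set.range (fun p : ℕ × I => ((p.1 + 1, true, p.2) : ℕ × Bool × I)) → T x = 0 := by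
    rintro ⟨d, b, i⟩ hx
    match d, b with
    | d, false => exact hT_f d i
    | 0, true => exact hT_t0 i
    | d + 1, true => exact absurd ⟨(d, i), rfl⟩ hx
  have hwsum : Summable fun p : ℕ × I => ‖w p‖ ^ (2 : ℝ≥0∞).toReal := by
    have := lp.memℓp w
    rwa [memℓp_gen_iff (by norm_num)] at this
  have hT : Memℓp T 2 := by
    apply memℓp_gen
    rw [← (hg2.summable_iff (f := fun x => ‖T x‖ ^ (2 : ℝ≥0∞).toReal)
      (fun x hx => by show ‖T x‖ ^ (2 : ℝ≥0∞).toReal = 0; rw [hTrange x hx]; simp))]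
    have heq : ((fun x => ‖T x‖ ^ (2 : ℝ≥0∞).toReal) ∘
          (fun p : ℕ × I => ((p.1 + 1, true, p.2) : ℕ × Bool × I)))
        = fun p : ℕ × I => (1/4) * ‖w p‖ ^ (2 : ℝ≥0∞).toReal := by
      funext p
      show ‖T (p.1 + 1, true, p.2)‖ ^ (2 : ℝ≥0∞).toReal = _
      rw [hT_ts p.1 p.2, norm_div, ENNReal.toReal_ofNat, Real.rpow_two, Real.rpow_two, div_pow]
      norm_num
      ring
    rw [heq]
    exact hwsum.mul_left _
  set t : lp (fun _ : ℕ × Bool × I => ℂ) 2 := ⟨T, hT⟩ with ht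
  have ht_apply : ∀ x, t x = T x := fun _ => rfl
  set u : lp (fun _ : ℕ × Bool × I => ℂ) 2 := (2 : ℂ)⁻¹ • W + t with hu
  have hu_apply : ∀ x, u x = (2 : ℂ)⁻¹ * W x + T x := by
    intro x
    rw [hu, lp.coeFn_add, Pi.add_apply, lp.coeFn_smul, Pi.smul_apply]
    rfl
  have hu_f : ∀ (d : ℕ) (i : I), u (d, false, i) = w (d, i) / 2 := by
    intro d i
    rw [hu_apply, hWf, hT_f]
    ring
  have hu_t0 : ∀ i : I, u ((0 : ℕ), true, i) = 0 := by
    intro i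
    rw [hu_apply, hWt, hT_t0]
    ring
  have hu_ts : ∀ (d : ℕ) (i : I), u (d + 1, true, i) = w (d, i) / 2 := by
    intro d i
    rw [hu_apply, hWt, hT_ts]
    ring
  -- HasSum decomposition of u
  have hW2 : HasSum (fun x : ℕ × Bool × I => lp.single 2 x (((2 : ℂ)⁻¹ • W :
      lp (fun _ : ℕ × Bool × I => ℂ) 2) x)) ((2 : ℂ)⁻¹ • W) :=
    lp.hasSum_single (by norm_num) _
  have hts : HasSum (fun x : ℕ × Bool × I => lp.single 2 x (t x)) t :=
    lp.hasSum_single (by norm_num) _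
  have hW2' : HasSum (fun p : ℕ × I => lp.single 2 ((p.1, false, p.2) : ℕ × Bool × I)
      (w p / 2)) ((2 : ℂ)⁻¹ • W) := by
    have vanish : ∀ x ∉ Set.range (fun p : ℕ × I => ((p.1, false, p.2) : ℕ × Bool × I)),
        lp.single (E := fun _ : ℕ × Bool × I => ℂ) 2 x (((2 : ℂ)⁻¹ • W :
          lp (fun _ : ℕ × Bool × I => ℂ) 2) x) = 0 := by
      rintro ⟨d, b, i⟩ hx
      match b with
      | false => exact absurd ⟨(d, i), rfl⟩ hx
      | true =>
        have h0 : ((2 : ℂ)⁻¹ • W : lp (fun _ : ℕ × Bool × I => ℂ) 2) (d, true, i) = 0 := by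
          rw [lp.coeFn_smul, Pi.smul_apply, hWt]; simp
        rw [h0]
        ext j
        simp [lp.single_apply]
    have h := (hg1.hasSum_iff vanish).2 hW2
    have hfun : ((fun x : ℕ × Bool × I => lp.single 2 x (((2 : ℂ)⁻¹ • W :
          lp (fun _ : ℕ × Bool × I => ℂ) 2) x)) ∘
        (fun p : ℕ × I => ((p.1, false, p.2) : ℕ × Bool × I))) =
        (fun p : ℕ × I => lp.single 2 ((p.1, false, p.2) : ℕ × Bool × I) (w p / 2)) := by
      funext p
      simp only [Function.comp_apply]
      congr 1
      rw [lp.coeFn_smul, Pi.smul_apply, hWf p.1 p.2]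
      show (2 : ℂ)⁻¹ * w (p.1, p.2) = w p / 2
      ring
    rwa [hfun] at h
  have hts' : HasSum (fun p : ℕ × I => lp.single 2 ((p.1 + 1, true, p.2) : ℕ × Bool × I)
      (w p / 2)) t := by
    have vanish : ∀ x ∉ Set.range (fun p : ℕ × I => ((p.1 + 1, true, p.2) : ℕ × Bool × I)),
        lp.single (E := fun _ : ℕ × Bool × I => ℂ) 2 x (t x) = 0 := by
      intro x hx
      rw [ht_apply, hTrange x hx]
      ext j
      simp [lp.single_apply]
    have h := (hg2.hasSum_iff vanish).2 hts
    have hfun : ((fun x : ℕ × Bool × I => lp.single 2 x (t x)) ∘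
        (fun p : ℕ × I => ((p.1 + 1, true, p.2) : ℕ × Bool × I))) =
        (fun p : ℕ × I => lp.single 2 ((p.1 + 1, true, p.2) : ℕ × Bool × I) (w p / 2)) := by
      funext p
      simp only [Function.comp_apply]
      congr 1
    rwa [hfun] at h
  have husum : HasSum (fun p : ℕ × I =>
      lp.single (E := fun _ : ℕ × Bool × I => ℂ) 2 ((p.1, false, p.2) : ℕ × Bool × I) (w p / 2)
        + lp.single 2 ((p.1 + 1, true, p.2) : ℕ × Bool × I) (w p / 2)) u :=
    hW2'.add hts'
  -- each term of the sum is in span S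
  have hmem_span : ∀ p : ℕ × I,
      (lp.single (E := fun _ : ℕ × Bool × I => ℂ) 2 ((p.1, false, p.2) : ℕ × Bool × I) (w p / 2)
        + lp.single 2 ((p.1 + 1, true, p.2) : ℕ × Bool × I) (w p / 2)) ∈
        Submodule.span ℂ S := by
    intro p
    have hgen : ((Real.sqrt 2)⁻¹ : ℂ) •
        (lp.single (E := fun _ : ℕ × Bool × I => ℂ) 2 ((p.1, false, p.2)) (1 : ℂ) +
          lp.single 2 ((p.1 + 1, true, p.2)) (1 : ℂ)) ∈ Submodule.span ℂ S := by
      apply Submodule.subset_span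
      rw [hS]
      exact Or.inr ⟨p.1, p.2, rfl⟩
    have hsm := Submodule.smul_mem (Submodule.span ℂ S)
      ((w p / 2) * ((Real.sqrt 2 : ℝ) : ℂ)) hgen
    convert hsm using 1
    rw [smul_smul]
    have h2 : ((Real.sqrt 2 : ℝ) : ℂ) ≠ 0 := by
      simp only [ne_eq, Complex.ofReal_eq_zero]
      positivity
    rw [mul_assoc, mul_inv_cancel₀ h2, mul_one, smul_add]
    rw [show (w p / 2) • lp.single (E := fun _ : ℕ × Bool × I => ℂ) 2
        ((p.1, false, p.2)) (1 : ℂ) = lp.single 2 ((p.1, false, p.2)) ((w p / 2) • (1:ℂ)) from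
        (lp.single_smul _ _ _ _).symm]
    rw [show (w p / 2) • lp.single (E := fun _ : ℕ × Bool × I => ℂ) 2
        ((p.1 + 1, true, p.2)) (1 : ℂ) = lp.single 2 ((p.1 + 1, true, p.2)) ((w p / 2) • (1:ℂ)) from
        (lp.single_smul _ _ _ _).symm]
    simp
  -- u ∈ K
  have hu_memK : u ∈ K := by
    rw [hK]
    have hcl : u ∈ closure ((Submodule.span ℂ S : Submodule ℂ _) :
        Set (lp (fun _ : ℕ × Bool × I => ℂ) 2)) := by
      apply mem_closure_of_tendsto husum
      filter_upwards with s
      exact Submodule.sum_mem _ (fun p _ => hmem_span p)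
    rwa [← Submodule.topologicalClosure_coe] at hcl
  -- W - u ∈ Kᗮ
  have hperp : W - u ∈ Kᗮ := by
    rw [Submodule.mem_orthogonal']
    intro v hv
    rw [hK] at hv
    have hker : (Submodule.span ℂ S).topologicalClosure ≤
        LinearMap.ker (innerSL ℂ (W - u)).toLinearMap := by
      apply Submodule.topologicalClosure_minimal
      · rw [Submodule.span_le]
        rintro v (⟨i, rfl⟩ | ⟨d, i, rfl⟩)
        · simp only [SetLike.mem_coe, LinearMap.mem_ker]
          show ⟪W - u, lp.single 2 ((0 : ℕ), true, i) (1 : ℂ)⟫ = 0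
          rw [lp.inner_single_right]
          have h0 : (W - u) ((0 : ℕ), true, i) = 0 := by
            rw [lp.coeFn_sub, Pi.sub_apply, hWt, hu_t0]; ring
          simp [h0]
        · simp only [SetLike.mem_coe, LinearMap.mem_ker]
          show ⟪W - u, ((Real.sqrt 2)⁻¹ : ℂ) •
            (lp.single 2 ((d, false, i) : ℕ × Bool × I) (1 : ℂ) +
              lp.single 2 ((d + 1, true, i) : ℕ × Bool × I) (1 : ℂ))⟫ = 0
          rw [inner_smul_right, inner_add_right, lp.inner_single_right, lp.inner_single_right]
          have h1 : (W - u) ((d : ℕ), false, i) = w (d, i) / 2 := by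
            rw [lp.coeFn_sub, Pi.sub_apply, hWf, hu_f]; ring
          have h2 : (W - u) ((d + 1 : ℕ), true, i) = -(w (d, i) / 2) := by
            rw [lp.coeFn_sub, Pi.sub_apply, hWt, hu_ts]; ring
          rw [h1, h2]
          simp
      · exact ContinuousLinearMap.isClosed_ker _
    exact hker hv
  -- the projection is u
  have hproj : ((K.orthogonalProjectionOnto W : K) :
      lp (fun _ : ℕ × Bool × I => ℂ) 2) = u :=
    by rw [← Submodule.starProjection_apply]; exact Submodule.eq_starProjection_of_mem_orthogonal hu_memK hperp
  -- compute the inner product ⟪u, W⟫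
  have hinner_uW : ⟪u, W⟫ = 1 / 2 := by
    have h1 : ⟪u, W⟫ = ∑' x : ℕ × Bool × I, conj (u x) * W x := by rw [lp.inner_eq_tsum]; simp only [RCLike.inner_apply']
    have hsupp : Function.support (fun x : ℕ × Bool × I => conj (u x) * W x) ⊆
        Set.range (fun p : ℕ × I => ((p.1, false, p.2) : ℕ × Bool × I)) := by
      rintro ⟨d, b, i⟩ hx
      match b with
      | false => exact ⟨(d, i), rfl⟩
      | true =>
        exfalso
        apply hx
        show conj (u (d, true, i)) * W (d, true, i) = 0
        rw [hWt]
        ring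
    have h2 := hg1.tsum_eq hsupp
    rw [h1, ← h2]
    have h3 : ((fun x : ℕ × Bool × I => conj (u x) * W x) ∘
        (fun p : ℕ × I => ((p.1, false, p.2) : ℕ × Bool × I))) =
        fun p : ℕ × I => (1/2 : ℂ) * (conj (w p) * w p) := by
      funext p
      show conj (u (p.1, false, p.2)) * W (p.1, false, p.2) = _
      rw [hu_f, hWf, map_div₀]
      simp only [map_ofNat]
      ring
    calc (∑' p : ℕ × I, ((fun x : ℕ × Bool × I => conj (u x) * W x) ∘
          (fun p : ℕ × I => ((p.1, false, p.2) : ℕ × Bool × I))) p)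
        = ∑' p : ℕ × I, (1/2 : ℂ) * (conj (w p) * w p) := by rw [h3]
      _ = (1/2 : ℂ) * ∑' p : ℕ × I, conj (w p) * w p := tsum_mul_left
      _ = (1/2 : ℂ) * ⟪w, w⟫ := by rw [lp.inner_eq_tsum w w]; simp only [RCLike.inner_apply']
      _ = 1 / 2 := by
          rw [inner_self_eq_norm_sq_to_K, hw]
          norm_num
  -- ⟪u, W - u⟫ = 0
  have hzero : ⟪u, W - u⟫ = 0 := (Submodule.mem_orthogonal K (W - u)).1 hperp u hu_memK
  have hinner_uu : ⟪u, u⟫ = 1 / 2 := by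
    have hsplit : ⟪u, W⟫ = ⟪u, u⟫ + ⟪u, W - u⟫ := by
      rw [← inner_add_right]
      congr 1
      abel
    rw [hzero, add_zero] at hsplit
    rw [← hsplit, hinner_uW]
  rw [hproj]
  have h4 := (inner_self_eq_norm_sq_to_K (𝕜 := ℂ) u).symm.trans hinner_uu
  have h5 : ((‖u‖ : ℂ)) ^ 2 = ((1 : ℂ) / 2) := h4
  have h6 : ((‖u‖ ^ 2 : ℝ) : ℂ) = ((1 / 2 : ℝ) : ℂ) := by
    push_cast
    rw [h5]
  exact_mod_cast h6
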